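/- Let d ≥ 1, let A : (Fin d → ℝ) → Matrix (Fin d) (Fin d) ℝ be any matrix-valued function, let h ∈ ℝ, and let y_f ∈ ℝ^d satisfy A y_f *ᵥ y_f = 0 (a steady state of y' = A(y)y). Then the splitting scheme started at y_f returns y_f: with x_{1/2} = exp((h/2)·A y_f) *ᵥ y_f, z₁ = exp(h·A x_{1/2}) *ᵥ y_f, x₁ = exp((h/2)·A z₁) *ᵥ x_{1/2}, one has x_{1/2} = z₁ = x₁ = y_f, and hence y₁ = (x₁ + z₁)/2 = y_f. -/

import Mathlib

open Matrix

lemma exp_mulVec_of_ker {d : ℕ} (M : Matrix (Fin d) (Fin d) ℝ) (v : Fin d → ℝ)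
    (hv : M *ᵥ v = 0) : NormedSpace.exp M *ᵥ v = v := by
  letI : SeminormedRing (Matrix (Fin d) (Fin d) ℝ) := Matrix.linftyOpSemiNormedRing
  letI : NormedRing (Matrix (Fin d) (Fin d) ℝ) := Matrix.linftyOpNormedRing
  letI : NormedAlgebra ℝ (Matrix (Fin d) (Fin d) ℝ) := Matrix.linftyOpNormedAlgebra
  have hpow : ∀ n : ℕ, 1 ≤ n → M ^ n *ᵥ v = 0 := by
    intro n hn
    induction n with
    | zero => omega
    | succ k ih =>
      rcases Nat.eq_or_lt_of_le hn with h1 | h1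
      · simpa [pow_one] using hv.symm ▸ (by simp [← h1, pow_one, hv])
      · have hk : 1 ≤ k := Nat.lt_succ_iff.mp h1
        have : M ^ (k + 1) *ᵥ v = M ^ k *ᵥ (M *ᵥ v) := by
          rw [pow_succ, ← Matrix.mulVec_mulVec]
        rw [this, hv, Matrix.mulVec_zero]
  -- continuous linear map: M ↦ M *ᵥ v
  let L : Matrix (Fin d) (Fin d) ℝ →ₗ[ℝ] (Fin d → ℝ) :=
    { toFun := fun N => N *ᵥ v
      map_add' := fun N₁ N₂ => Matrix.add_mulVec N₁ N₂ v
      map_smul' := fun c N => Matrix.smul_mulVec c N v }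
  have hL : Continuous L := LinearMap.continuous_of_finiteDimensional L
  have hsum := NormedSpace.expSeries_summable' (𝕂 := ℝ) M
  have hexp : NormedSpace.exp M = ∑' n : ℕ, ((n.factorial : ℝ)⁻¹ : ℝ) • M ^ n := by
    rw [NormedSpace.exp_eq_tsum ℝ]
  have key : L (NormedSpace.exp M) = ∑' n : ℕ, L ((n.factorial : ℝ)⁻¹ • M ^ n) := by
    rw [hexp]
    exact (hsum.hasSum.map L hL).tsum_eq.symm
  have : L (NormedSpace.exp M) = v := by
    rw [key, tsum_eq_single 0]
    · simp [L]
    · intro n hn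
      have h1 : 1 ≤ n := Nat.one_le_iff_ne_zero.mpr hn
      simp only [L, LinearMap.coe_mk, AddHom.coe_mk, Matrix.smul_mulVec,
        hpow n h1, smul_zero]
  simpa [L] using this

/-- The Strang splitting scheme exactly preserves steady states of `y' = A(y)y`. -/
theorem strangSplitting_fixes_steadyState
    {d : ℕ} (hd : 1 ≤ d)
    (A : (Fin d → ℝ) → Matrix (Fin d) (Fin d) ℝ)
    (h : ℝ)
    (yf : Fin d → ℝ) (hyf : A yf *ᵥ yf = 0)
    (xhalf z₁ x₁ : Fin d → ℝ)
    (hxhalf : xhalf = NormedSpace.exp ((h / 2) • A yf) *ᵥ yf)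
    (hz₁ : z₁ = NormedSpace.exp (h • A xhalf) *ᵥ yf)
    (hx₁ : x₁ = NormedSpace.exp ((h / 2) • A z₁) *ᵥ xhalf) :
    xhalf = yf ∧ z₁ = yf ∧ x₁ = yf ∧ (1 / 2 : ℝ) • (x₁ + z₁) = yf := by
  have smul_ker : ∀ s : ℝ, (s • A yf) *ᵥ yf = 0 := fun s => by
    rw [Matrix.smul_mulVec, hyf, smul_zero]
  have h1 : xhalf = yf := by
    rw [hxhalf, exp_mulVec_of_ker _ _ (smul_ker _)]
  have h2 : z₁ = yf := by
    rw [hz₁, h1, exp_mulVec_of_ker _ _ (smul_ker _)]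
  have h3 : x₁ = yf := by
    rw [hx₁, h2, h1, exp_mulVec_of_ker _ _ (smul_ker _)]
  refine ⟨h1, h2, h3, ?_⟩
  rw [h2, h3]
  ext i; simp; ring
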